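/- arXiv:2010.08956 — 2 statements merged into one kernel-verified Lean document; each statement's English description precedes it below -/
import Mathlib

section
/- Let c₀ > 0 and let α: [0, T] → [0, ∞) be absolutely continuous with (1/2)(d/dt)α² + c₀ α² ≤ F(t)·α for a.e. t, where F ≥ 0 is integrable. Then for all t ∈ [0, T], α(t) + c₀ ∫₀ᵗ α(τ) dτ ≤ α(0) + ∫₀ᵗ F(τ) dτ. -/
open MeasureTheory

/-- Integrated energy inequality: if `α ≥ 0` is (absolutely) continuous and differentiable on
`[0,T]` with `(1/2)(d/dt)α² + c₀ α² ≤ F·α` a.e., `F ≥ 0` integrable, then for all `t ∈ [0,T]`,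
`α(t) + c₀ ∫₀ᵗ α ≤ α(0) + ∫₀ᵗ F`. -/
theorem stmt7 (c₀ T : ℝ) (hc₀ : 0 < c₀) (hT : 0 ≤ T) (α F : ℝ → ℝ)
    (hα_nonneg : ∀ t : ℝ, 0 ≤ α t) (hF_nonneg : ∀ t : ℝ, 0 ≤ F t)
    (hF_int : IntegrableOn F (Set.Icc 0 T))
    (hα_cont : ContinuousOn α (Set.Icc 0 T))
    (hα_diff : DifferentiableOn ℝ α (Set.Icc 0 T))
    (hineq : ∀ᵐ t ∂(volume.restrict (Set.Icc 0 T)),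
      (1 / 2) * deriv (fun s => (α s) ^ 2) t + c₀ * (α t) ^ 2 ≤ F t * α t) :
    ∀ t ∈ Set.Icc (0:ℝ) T,
      α t + c₀ * ∫ τ in (0:ℝ)..t, α τ ≤ α 0 + ∫ τ in (0:ℝ)..t, F τ := by
  intro t ht
  obtain ⟨ht0, htT⟩ := ht
  -- clamped version of α, continuous on all of ℝ
  set b : ℝ → ℝ := fun s => α (max 0 (min s T)) with hb_def
  have hclamp_mem : ∀ s : ℝ, max 0 (min s T) ∈ Set.Icc (0:ℝ) T := by
    intro s
    constructor
    · exact le_max_left _ _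
    · exact max_le hT (min_le_right _ _)
  have hb_cont : Continuous b := by
    apply hα_cont.comp_continuous
    · exact continuous_const.max (continuous_id.min continuous_const)
    · exact hclamp_mem
  have hb_eq : ∀ s ∈ Set.Icc (0:ℝ) T, b s = α s := by
    intro s hs
    simp only [hb_def]
    rw [min_eq_left hs.2, max_eq_right hs.1]
  have hb_nonneg : ∀ s, 0 ≤ b s := fun s => hα_nonneg _
  have key : ∀ ε : ℝ, 0 < ε →
      α t + c₀ * ∫ τ in (0:ℝ)..t, α τ ≤ α 0 + (∫ τ in (0:ℝ)..t, F τ) + ε * (1 + c₀ * t) := by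
    intro ε hε
    set g : ℝ → ℝ := fun s => Real.sqrt (b s ^ 2 + ε ^ 2) with hg_def
    have hg_cont : Continuous g := ((hb_cont.pow 2).add continuous_const).sqrt
    have hu_pos : ∀ s, 0 < b s ^ 2 + ε ^ 2 := fun s => by positivity
    have hg_sq : ∀ s, g s ^ 2 = b s ^ 2 + ε ^ 2 := fun s =>
      Real.sq_sqrt (hu_pos s).le
    have hg_pos : ∀ s, 0 < g s := fun s => Real.sqrt_pos.mpr (hu_pos s)
    have hge : ∀ s, ε ≤ g s := by
      intro s
      have : ε = Real.sqrt (ε ^ 2) := (Real.sqrt_sq hε.le).symm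
      rw [this]
      exact Real.sqrt_le_sqrt (by nlinarith [sq_nonneg (b s)])
    have hgb : ∀ s, b s ≤ g s := by
      intro s
      have : b s = Real.sqrt (b s ^ 2) := (Real.sqrt_sq (hb_nonneg s)).symm
      rw [this]
      exact Real.sqrt_le_sqrt (by nlinarith)
    -- the auxiliary function and its candidate derivative
    set f : ℝ → ℝ := fun s => g s + c₀ * (∫ τ in (0:ℝ)..s, g τ) - c₀ * ε * s with hf_def
    set f' : ℝ → ℝ := fun s => deriv g s + c₀ * g s - c₀ * ε with hf'_def
    -- derivative of g at interior points
    have hg_deriv : ∀ x ∈ Set.Ioo (0:ℝ) T,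
        HasDerivAt g (b x * deriv α x / g x) x := by
      intro x hx
      have hxIcc : x ∈ Set.Icc (0:ℝ) T := Set.mem_Icc_of_Ioo hx
      have hnhds : Set.Icc (0:ℝ) T ∈ nhds x := Icc_mem_nhds hx.1 hx.2
      have hαx : DifferentiableAt ℝ α x :=
        (hα_diff x hxIcc).differentiableAt hnhds
      have hbα : b =ᶠ[nhds x] α := by
        filter_upwards [hnhds] with s hs
        exact hb_eq s hs
      have hbx : HasDerivAt b (deriv α x) x :=
        hαx.hasDerivAt.congr_of_eventuallyEq hbα
      have hu : HasDerivAt (fun s => b s ^ 2 + ε ^ 2)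
          (2 * b x ^ 1 * deriv α x) x := by
        simpa using ((hbx.pow 2).add_const (ε ^ 2))
      have hne : b x ^ 2 + ε ^ 2 ≠ 0 := (hu_pos x).ne'
      have := hu.sqrt hne
      have hgx : Real.sqrt (b x ^ 2 + ε ^ 2) = g x := rfl
      convert this using 1
      rw [hgx]
      field_simp
    -- derivative of f at interior points of [0, t]
    have hIoo_sub : Set.Ioo (0:ℝ) t ⊆ Set.Ioo (0:ℝ) T := Set.Ioo_subset_Ioo le_rfl htT
    have hf_deriv : ∀ x ∈ Set.Ioo (0:ℝ) t,
        HasDerivWithinAt f (f' x) (Set.Ioi x) x := by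
      intro x hx
      have hx' := hIoo_sub hx
      have hgd := hg_deriv x hx'
      have hInt : HasDerivAt (fun s => ∫ τ in (0:ℝ)..s, g τ) (g x) x :=
        intervalIntegral.integral_hasDerivAt_right
          (hg_cont.intervalIntegrable _ _)
          (hg_cont.stronglyMeasurableAtFilter _ _)
          hg_cont.continuousAt
      have hlin : HasDerivAt (fun s : ℝ => c₀ * ε * s) (c₀ * ε) x := by
        simpa using (hasDerivAt_id x).const_mul (c₀ * ε)
      have hder : HasDerivAt f (b x * deriv α x / g x + c₀ * g x - c₀ * ε) x :=
        (hgd.add (hInt.const_mul c₀)).sub hlin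
      have : f' x = b x * deriv α x / g x + c₀ * g x - c₀ * ε := by
        simp only [hf'_def, hgd.deriv]
      rw [this]
      exact hder.hasDerivWithinAt
    -- a.e. bound f' ≤ F on [0, t]
    have hle_restrict : volume.restrict (Set.Icc (0:ℝ) t) ≤ volume.restrict (Set.Icc (0:ℝ) T) :=
      Measure.restrict_mono (Set.Icc_subset_Icc le_rfl htT) le_rfl
    have hineq_t : ∀ᵐ x ∂(volume.restrict (Set.Icc (0:ℝ) t)),
        (1 / 2) * deriv (fun s => (α s) ^ 2) x + c₀ * (α x) ^ 2 ≤ F x * α x :=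
      ae_mono hle_restrict hineq
    have hne0 : ∀ᵐ x ∂(volume.restrict (Set.Icc (0:ℝ) t)), x ≠ 0 ∧ x ≠ t := by
      apply ae_restrict_of_ae
      have h0 : ∀ᵐ x : ℝ ∂volume, x ≠ 0 := by
        rw [MeasureTheory.ae_iff]
        simpa using measure_singleton (0:ℝ)
      have h1 : ∀ᵐ x : ℝ ∂volume, x ≠ t := by
        rw [MeasureTheory.ae_iff]
        simpa using measure_singleton t
      filter_upwards [h0, h1] with x hx0 hx1
      exact ⟨hx0, hx1⟩
    have hmemIoo : ∀ᵐ x ∂(volume.restrict (Set.Icc (0:ℝ) t)), x ∈ Set.Ioo (0:ℝ) t := by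
      filter_upwards [ae_restrict_mem measurableSet_Icc, hne0] with x hx hx'
      exact ⟨lt_of_le_of_ne hx.1 (Ne.symm hx'.1), lt_of_le_of_ne hx.2 hx'.2⟩
    have hae : ∀ᵐ x ∂(volume.restrict (Set.Icc (0:ℝ) t)), f' x ≤ F x := by
      filter_upwards [hineq_t, hmemIoo] with x hx hxIoo
      have hx' := hIoo_sub hxIoo
      have hxIcc : x ∈ Set.Icc (0:ℝ) T := Set.mem_Icc_of_Ioo hx'
      have hnhds : Set.Icc (0:ℝ) T ∈ nhds x := Icc_mem_nhds hx'.1 hx'.2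
      have hαx : DifferentiableAt ℝ α x :=
        (hα_diff x hxIcc).differentiableAt hnhds
      have hsq : deriv (fun s => (α s) ^ 2) x = 2 * α x ^ 1 * deriv α x :=
        (hαx.hasDerivAt.pow 2).deriv
      rw [hsq] at hx
      have hbαx : b x = α x := hb_eq x hxIcc
      have hgd := hg_deriv x hx'
      have hderiv_g : deriv g x = b x * deriv α x / g x := hgd.deriv
      simp only [hf'_def]
      rw [hderiv_g, hbαx]
      set d := deriv α x with hd_def
      have hgpos := hg_pos x
      have hgsq := hg_sq x
      rw [hbαx] at hgsq
      have h1 : F x * α x ≤ F x * g x :=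
        mul_le_mul_of_nonneg_left (hbαx ▸ hgb x) (hF_nonneg x)
      have h2 : c₀ * ε * ε ≤ c₀ * ε * g x :=
        mul_le_mul_of_nonneg_left (hge x) (by positivity)
      have hdiv : α x * d / g x ≤ F x + c₀ * ε - c₀ * g x := by
        rw [div_le_iff₀ hgpos]
        nlinarith [hx, h1, h2, hgsq]
      linarith
    -- define the dominating integrable function
    set φ : ℝ → ℝ := fun s => max (F s) (f' s) with hφ_def
    have hFt_int : IntegrableOn F (Set.Icc 0 t) :=
      hF_int.mono_set (Set.Icc_subset_Icc le_rfl htT)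
    have hφ_ae : φ =ᶠ[ae (volume.restrict (Set.Icc (0:ℝ) t))] F := by
      filter_upwards [hae] with x hx
      exact max_eq_left hx
    have hφ_int : IntegrableOn φ (Set.Icc 0 t) := hFt_int.congr hφ_ae.symm
    have hf_cont : ContinuousOn f (Set.Icc (0:ℝ) t) := by
      apply Continuous.continuousOn
      exact (hg_cont.add (continuous_const.mul
        (intervalIntegral.continuous_primitive (fun a b => hg_cont.intervalIntegrable a b) 0))).sub
        (continuous_const.mul continuous_id)
    have hmain : f t - f 0 ≤ ∫ y in (0:ℝ)..t, φ y :=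
      intervalIntegral.sub_le_integral_of_hasDeriv_right_of_le ht0 hf_cont hf_deriv hφ_int
        (fun x _ => le_max_right _ _)
    have hint_eq : ∫ y in (0:ℝ)..t, φ y = ∫ y in (0:ℝ)..t, F y := by
      apply intervalIntegral.integral_congr_ae
      have := (ae_restrict_iff' measurableSet_Icc).mp hφ_ae
      filter_upwards [this] with x hx hxI
      have : x ∈ Set.Icc (0:ℝ) t := by
        rw [Set.uIoc_of_le ht0] at hxI
        exact Set.Ioc_subset_Icc_self hxI
      exact hx this
    rw [hint_eq] at hmain
    -- unpack f t and f 0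
    have hf0 : f 0 = g 0 := by
      simp [hf_def]
    have hg0 : g 0 ≤ α 0 + ε := by
      have hb0 : b 0 = α 0 := hb_eq 0 ⟨le_rfl, hT⟩
      have : g 0 = Real.sqrt (α 0 ^ 2 + ε ^ 2) := by rw [hg_def]; simp [hb0]
      rw [this]
      have h1 : Real.sqrt (α 0 ^ 2 + ε ^ 2) ≤ Real.sqrt ((α 0 + ε) ^ 2) :=
        Real.sqrt_le_sqrt (by nlinarith [hα_nonneg 0])
      rwa [Real.sqrt_sq (add_nonneg (hα_nonneg 0) hε.le)] at h1
    -- compare integrals of α and g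
    have hα_intble : IntervalIntegrable α volume 0 t := by
      apply ContinuousOn.intervalIntegrable
      rw [Set.uIcc_of_le ht0]
      exact hα_cont.mono (Set.Icc_subset_Icc le_rfl htT)
    have hg_intble : IntervalIntegrable g volume 0 t := hg_cont.intervalIntegrable _ _
    have hint_mono : (∫ τ in (0:ℝ)..t, α τ) ≤ ∫ τ in (0:ℝ)..t, g τ := by
      apply intervalIntegral.integral_mono_on ht0 hα_intble hg_intble
      intro x hx
      have : b x = α x := hb_eq x ⟨hx.1, le_trans hx.2 htT⟩
      rw [← this]
      exact hgb x
    have hαt_le : α t ≤ g t := by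
      have : b t = α t := hb_eq t ⟨ht0, htT⟩
      rw [← this]
      exact hgb t
    have hft : f t = g t + c₀ * (∫ τ in (0:ℝ)..t, g τ) - c₀ * ε * t := rfl
    have hc₀int : c₀ * (∫ τ in (0:ℝ)..t, α τ) ≤ c₀ * (∫ τ in (0:ℝ)..t, g τ) :=
      mul_le_mul_of_nonneg_left hint_mono hc₀.le
    rw [hft, hf0] at hmain
    nlinarith [hmain, hg0, hαt_le, hc₀int]
  -- conclude by letting ε → 0
  apply le_of_forall_pos_le_add
  intro δ hδ
  have hpos : 0 < 1 + c₀ * t := by nlinarith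
  have := key (δ / (1 + c₀ * t)) (by positivity)
  have heq : δ / (1 + c₀ * t) * (1 + c₀ * t) = δ := by
    field_simp
  linarith [this, heq.ge, heq.le]
end

section
/- Let c₀ > 0, α ≥ 1, and g: [0, ∞) → [0, ∞) measurable with sup_{τ ≥ 1} τ^α g(τ) < ∞. Then sup_{t ≥ 2} t^α ∫₁ᵗ e^{c₀(τ − t)} g(τ) dτ ≤ C(c₀, α) sup_{τ ≥ 1} τ^α g(τ). -/
open Real MeasureTheory intervalIntegral

lemma aux_poly_exp19 (n : ℕ) (k : ℝ) (hk : 0 < k) (s : ℝ) (hs : 0 ≤ s) :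
    (1 + s) ^ n ≤ (max 1 ((n:ℝ)/k)) ^ n * Real.exp (k * s) := by
  set M := max 1 ((n:ℝ)/k) with hM
  have hM1 : (1:ℝ) ≤ M := le_max_left _ _
  rcases Nat.eq_zero_or_pos n with h0 | hn
  · simp [h0, Real.one_le_exp_iff]
    positivity
  · have hn' : (0:ℝ) < n := by exact_mod_cast hn
    have hM2 : (n:ℝ)/k ≤ M := le_max_right _ _
    have h1 : 1 + s ≤ M * (1 + k*s/(n:ℝ)) := by
      have h3 : s ≤ M * (k*s/(n:ℝ)) := by
        have he : s = ((n:ℝ)/k) * (k*s/(n:ℝ)) := by field_simp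
        nth_rewrite 1 [he]
        have hnn : (0:ℝ) ≤ k*s/(n:ℝ) := by positivity
        exact mul_le_mul_of_nonneg_right hM2 hnn
      nlinarith
    have h2 : 1 + k*s/(n:ℝ) ≤ Real.exp (k*s/(n:ℝ)) := by
      have := Real.add_one_le_exp (k*s/(n:ℝ)); linarith
    calc (1+s)^n ≤ (M * Real.exp (k*s/(n:ℝ)))^n := by
          apply pow_le_pow_left₀ (by linarith)
          calc 1 + s ≤ M * (1 + k*s/(n:ℝ)) := h1
            _ ≤ M * Real.exp (k*s/(n:ℝ)) := by
                apply mul_le_mul_of_nonneg_left h2 (by linarith)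
      _ = M^n * Real.exp (k*s/(n:ℝ))^n := mul_pow _ _ _
      _ = M^n * Real.exp (k*s) := by
          rw [← Real.exp_nat_mul]
          congr 1
          field_simp

/-- Weighted exponential-convolution bound: if `c₀ > 0`, `α ≥ 1` and `g ≥ 0` is measurable
with `sup_{τ ≥ 1} τ^α g(τ) < ∞`, then
`sup_{t ≥ 2} t^α ∫₁ᵗ e^{c₀(τ−t)} g(τ) dτ ≤ C(c₀, α) sup_{τ ≥ 1} τ^α g(τ)`. -/
theorem stmt19 (c₀ α : ℝ) (hc₀ : 0 < c₀) (hα : 1 ≤ α) :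
    ∃ C : ℝ, 0 < C ∧ ∀ (g : ℝ → ℝ) (K : ℝ),
      Measurable g → (∀ τ : ℝ, 0 ≤ g τ) →
      (∀ τ : ℝ, 1 ≤ τ → τ ^ α * g τ ≤ K) →
      ∀ t : ℝ, 2 ≤ t →
        t ^ α * ∫ τ in (1:ℝ)..t, Real.exp (c₀ * (τ - t)) * g τ ≤ C * K := by
  set k := c₀/2 with hkdef
  have hk : 0 < k := by positivity
  set n := ⌈α⌉₊ with hndef
  set M := max 1 ((n:ℝ)/k) with hMdef
  have hM1 : (1:ℝ) ≤ M := le_max_left _ _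
  have hMn : (1:ℝ) ≤ M^n := one_le_pow₀ hM1
  refine ⟨M^n * (2/c₀), by positivity, ?_⟩
  intro g K hgm hg0 hK t ht
  have ht1 : (1:ℝ) ≤ t := by linarith
  have ht0 : (0:ℝ) < t := by linarith
  have htα : (0:ℝ) < t^α := Real.rpow_pos_of_pos ht0 α
  have hK0 : 0 ≤ K := by
    have h1 := hK 1 le_rfl
    have h2 := hg0 1
    rw [Real.one_rpow, one_mul] at h1
    linarith
  -- pointwise bound on [1,t], with the t^α factor absorbed
  have hptwise : ∀ τ ∈ Set.Icc (1:ℝ) t,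
      t^α * (Real.exp (c₀ * (τ - t)) * g τ) ≤ K * M^n * Real.exp (k * (τ - t)) := by
    intro τ hτ
    obtain ⟨hτ1, hτt⟩ := hτ
    have hτ0 : (0:ℝ) < τ := by linarith
    have hτα : (0:ℝ) < τ^α := Real.rpow_pos_of_pos hτ0 α
    have hgτ : g τ ≤ K / τ^α := by
      have h := hK τ hτ1
      rw [le_div_iff₀ hτα]
      linarith [h, mul_comm (g τ) (τ^α)]
    have hs : 0 ≤ t - τ := by linarith
    have key : (t/τ)^α ≤ M^n * Real.exp (k * (t - τ)) := by
      have h1 : t/τ ≤ 1 + (t - τ) := by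
        rw [div_le_iff₀ hτ0]; nlinarith
      have h2 : (t/τ)^α ≤ (1 + (t-τ))^α :=
        Real.rpow_le_rpow (by positivity) h1 (by linarith)
      have h3 : (1 + (t-τ))^α ≤ (1 + (t-τ))^(n:ℝ) :=
        Real.rpow_le_rpow_of_exponent_le (by linarith) (Nat.le_ceil α)
      have h4 : (1 + (t-τ))^(n:ℝ) = (1 + (t-τ))^n := Real.rpow_natCast _ n
      have h5 := aux_poly_exp19 n k hk (t-τ) hs
      calc (t/τ)^α ≤ (1 + (t-τ))^α := h2
        _ ≤ (1 + (t-τ))^(n:ℝ) := h3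
        _ = (1 + (t-τ))^n := h4
        _ ≤ M^n * Real.exp (k * (t-τ)) := h5
    have hd : (t/τ)^α = t^α / τ^α := Real.div_rpow (le_of_lt ht0) (le_of_lt hτ0) α
    have hexps : Real.exp (k*(t-τ)) * Real.exp (c₀*(τ-t)) = Real.exp (k*(τ-t)) := by
      rw [← Real.exp_add]; congr 1; rw [hkdef]; ring
    calc t^α * (Real.exp (c₀ * (τ - t)) * g τ)
        ≤ t^α * (Real.exp (c₀ * (τ - t)) * (K/τ^α)) := by
          apply mul_le_mul_of_nonneg_left
            (mul_le_mul_of_nonneg_left hgτ (Real.exp_nonneg _)) htα.le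
      _ = K * (t/τ)^α * Real.exp (c₀*(τ-t)) := by rw [hd]; ring
      _ ≤ K * (M^n * Real.exp (k*(t-τ))) * Real.exp (c₀*(τ-t)) :=
          mul_le_mul_of_nonneg_right (mul_le_mul_of_nonneg_left key hK0)
            (Real.exp_nonneg _)
      _ = K * M^n * Real.exp (k*(τ-t)) := by
          rw [mul_assoc, mul_assoc, hexps, ← mul_assoc]
  -- integrability
  have hf_int : IntervalIntegrable (fun τ => Real.exp (c₀*(τ-t)) * g τ) volume 1 t := by
    rw [intervalIntegrable_iff_integrableOn_Ioc_of_le ht1]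
    apply Integrable.mono' (integrable_const K)
    · exact (((Real.measurable_exp.comp ((measurable_id.sub_const t).const_mul c₀)).mul
        hgm)).aestronglyMeasurable
    · filter_upwards [ae_restrict_mem measurableSet_Ioc] with τ hτ
      obtain ⟨hτ1, hτt⟩ := hτ
      have hτ0 : (0:ℝ) < τ := by linarith
      have hτα1 : (1:ℝ) ≤ τ^α := Real.one_le_rpow hτ1.le (by linarith)
      have hgτ : g τ ≤ K := by
        have h := hK τ hτ1.le
        nlinarith [hg0 τ]
      have hE : Real.exp (c₀*(τ-t)) ≤ 1 := by
        rw [Real.exp_le_one_iff]; nlinarith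
      have h0 : 0 ≤ Real.exp (c₀*(τ-t)) * g τ := mul_nonneg (Real.exp_nonneg _) (hg0 τ)
      rw [Real.norm_eq_abs, abs_of_nonneg h0]
      nlinarith [Real.exp_nonneg (c₀*(τ-t)), hg0 τ]
  have hf_int' : IntervalIntegrable (fun τ => t^α * (Real.exp (c₀*(τ-t)) * g τ))
      volume 1 t := hf_int.const_mul _
  have hE_int : IntervalIntegrable (fun τ => K * M^n * Real.exp (k*(τ-t))) volume 1 t :=
    (Continuous.intervalIntegrable (by continuity) 1 t)
  -- value of the exponential integral
  have hEval : ∫ τ in (1:ℝ)..t, Real.exp (k*(τ-t)) ≤ 2/c₀ := by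
    have hrw : (fun τ => Real.exp (k*(τ-t))) = fun τ => Real.exp (k*τ + -(k*t)) := by
      funext τ; congr 1; ring
    rw [hrw, integral_comp_mul_add Real.exp (ne_of_gt hk) (-(k*t)), integral_exp,
      smul_eq_mul]
    have h1 : k*t + -(k*t) = 0 := by ring
    rw [h1, Real.exp_zero]
    have h2 : (0:ℝ) < Real.exp (k*1 + -(k*t)) := Real.exp_pos _
    have h3 : k⁻¹ = 2/c₀ := by rw [hkdef]; field_simp
    rw [h3]
    have h4 : 1 - Real.exp (k*1 + -(k*t)) ≤ 1 := by linarith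
    nlinarith [h4, div_pos (by norm_num : (0:ℝ) < 2) hc₀]
  calc t ^ α * ∫ τ in (1:ℝ)..t, Real.exp (c₀ * (τ - t)) * g τ
      = ∫ τ in (1:ℝ)..t, t^α * (Real.exp (c₀ * (τ - t)) * g τ) :=
        (intervalIntegral.integral_const_mul _ _).symm
    _ ≤ ∫ τ in (1:ℝ)..t, K * M^n * Real.exp (k * (τ - t)) :=
        intervalIntegral.integral_mono_on ht1 hf_int' hE_int hptwise
    _ = K * M^n * ∫ τ in (1:ℝ)..t, Real.exp (k * (τ - t)) :=
        intervalIntegral.integral_const_mul _ _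
    _ ≤ K * M^n * (2/c₀) := by
        apply mul_le_mul_of_nonneg_left hEval (mul_nonneg hK0 (by positivity))
    _ = M^n * (2/c₀) * K := by ring
end
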